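/- Fix an integer d ≥ 1 and let β > 1/2. There exists a constant C > 0 depending only on β such that: if A : E × E → ℂ is an infinite matrix with |A|_{β+} < ∞, then A defines a bounded linear operator on ℓ²(E), its operator exponential e^A (defined by the norm-convergent exponential series of bounded operators on ℓ²(E)) has matrix entries (e^A)_a^b = ⟨δ_a, e^A δ_b⟩ where δ_a is the standard basis, and the matrix e^A − Id satisfies |e^A − Id|_{β+} ≤ e^{C·|A|_{β+}} · |A|_{β+}. -/

import Mathlib

open scoped Classical

/-- `hermiteDim d j` is the number of `d`-tuples of odd natural numbers summing to `j`,
i.e. the multiplicity `d_j` of the eigenvalue `j` of the `d`-dimensional harmonic oscillator. -/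
noncomputable def hermiteDim (d j : ℕ) : ℕ :=
  ((Finset.univ : Finset (Fin d → Fin (j + 1))).filter
    (fun f => (∀ i, Odd ((f i : ℕ))) ∧ ∑ i, ((f i : ℕ)) = j)).card

/-- The index set `E = {(j, l) : j ∈ Ê, 1 ≤ l ≤ d_j}`, encoded as pairs `⟨k, l⟩` where
`j = d + 2k` runs over `Ê = {d, d+2, …}` and `l` runs over a set of cardinality `d_j`. -/
abbrev IndexE (d : ℕ) : Type := Σ k : ℕ, Fin (hermiteDim d (d + 2 * k))

/-- The eigenvalue `w_a` attached to `a ∈ E`. -/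
def wE (d : ℕ) (a : IndexE d) : ℕ := d + 2 * a.1

/-- The operator norm of the block `A_{[j]}^{[j']}`, `j = d + 2k`, `j' = d + 2k'`, of an
infinite matrix `A : E × E → ℂ`, as a linear map between the corresponding Euclidean spaces. -/
noncomputable def blockNorm (d : ℕ) (A : IndexE d → IndexE d → ℂ) (k k' : ℕ) : ℝ :=
  ‖LinearMap.toContinuousLinearMap (Matrix.toEuclideanLin
      (Matrix.of fun (i : Fin (hermiteDim d (d + 2 * k)))
        (i' : Fin (hermiteDim d (d + 2 * k'))) => A ⟨k, i⟩ ⟨k', i'⟩))‖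

/-- The weight `(1 + ln j)^β (1 + ln j')^β` with `j = d + 2k`, `j' = d + 2k'`. -/
noncomputable def wtBeta (d : ℕ) (β : ℝ) (k k' : ℕ) : ℝ :=
  (1 + Real.log ((d : ℝ) + 2 * k)) ^ β * (1 + Real.log ((d : ℝ) + 2 * k')) ^ β

/-- The weight `(1 + |j - j'|)(1 + ln j)^β (1 + ln j')^β` with `j = d + 2k`, `j' = d + 2k'`. -/
noncomputable def wtBetaPlus (d : ℕ) (β : ℝ) (k k' : ℕ) : ℝ :=
  (1 + |((d : ℝ) + 2 * k) - ((d : ℝ) + 2 * k')|) * wtBeta d β k k'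


namespace Stmt7
open scoped ENNReal NNReal


noncomputable def LL (d m : ℕ) : ℝ := 1 + Real.log ((d:ℝ) + 2*m)

lemma arg_ge {d : ℕ} (hd : 1 ≤ d) (m : ℕ) : (1:ℝ) ≤ (d:ℝ) + 2*m := by
  have h : (1:ℝ) ≤ (d:ℝ) := by exact_mod_cast hd
  have : (0:ℝ) ≤ (m:ℝ) := Nat.cast_nonneg m
  nlinarith

lemma one_le_LL {d : ℕ} (hd : 1 ≤ d) (m : ℕ) : 1 ≤ LL d m := by
  have := Real.log_nonneg (arg_ge hd m)
  simp only [LL]; linarith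

lemma LL_pos {d : ℕ} (hd : 1 ≤ d) (m : ℕ) : 0 < LL d m :=
  lt_of_lt_of_le one_pos (one_le_LL hd m)

lemma LL_mono {d : ℕ} (hd : 1 ≤ d) {m m' : ℕ} (h : m ≤ m') : LL d m ≤ LL d m' := by
  simp only [LL]
  have h1 : (0:ℝ) < (d:ℝ) + 2*m := lt_of_lt_of_le one_pos (arg_ge hd m)
  have h2 : ((d:ℝ) + 2*m) ≤ ((d:ℝ) + 2*m') := by
    have : (m:ℝ) ≤ (m':ℝ) := by exact_mod_cast h
    linarith
  linarith [Real.log_le_log h1 h2]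

noncomputable def DD (d k m : ℕ) : ℝ := 1 + |((d:ℝ) + 2*k) - ((d:ℝ) + 2*m)|

lemma one_le_DD (d k m : ℕ) : 1 ≤ DD d k m :=
  le_add_of_nonneg_right (abs_nonneg _)

lemma DD_pos (d k m : ℕ) : 0 < DD d k m := lt_of_lt_of_le one_pos (one_le_DD d k m)

lemma DD_comm (d k m : ℕ) : DD d k m = DD d m k := by
  simp only [DD, abs_sub_comm]

lemma DD_add (d k t : ℕ) : DD d k (k + t) = 1 + 2*t := by
  simp only [DD]
  push_cast
  rw [show ((d:ℝ) + 2*k) - (d + 2*((k:ℝ)+t)) = -(2*t) by ring, abs_neg,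
    abs_of_nonneg (by positivity)]

lemma DD_sub {d k m : ℕ} (h : m ≤ k) : DD d k m = 1 + 2*((k:ℝ) - m) := by
  have hm : (m:ℝ) ≤ k := by exact_mod_cast h
  simp only [DD]
  rw [show ((d:ℝ) + 2*k) - (d + 2*m) = 2*((k:ℝ)-m) by ring, abs_of_nonneg (by linarith)]

lemma DD_triangle (d k1 k k2 : ℕ) : DD d k1 k2 ≤ DD d k1 k + DD d k k2 := by
  simp only [DD]
  have := abs_sub_le ((d:ℝ) + 2*k1) ((d:ℝ) + 2*k) ((d:ℝ) + 2*k2)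
  linarith [abs_nonneg (((d:ℝ) + 2*k1) - ((d:ℝ) + 2*k)),
    abs_nonneg (((d:ℝ) + 2*k) - ((d:ℝ) + 2*k2))]

/-- the base decaying sequence -/
noncomputable def gg (d : ℕ) (γ : ℝ) (t : ℕ) : ℝ := ((1 + 2*(t:ℝ)) * LL d t ^ γ)⁻¹

lemma gg_nonneg {d : ℕ} (hd : 1 ≤ d) (γ : ℝ) (t : ℕ) : 0 ≤ gg d γ t := by
  have := LL_pos hd t
  simp only [gg]; positivity

lemma gg_summable {d : ℕ} (hd : 1 ≤ d) {γ : ℝ} (hγ : 1 < γ) : Summable (gg d γ) := by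
  have hγ0 : 0 ≤ γ := by linarith
  have hlog2 : (0:ℝ) < Real.log 2 := Real.log_pos (by norm_num)
  have hanti : ∀ ⦃m n : ℕ⦄, 0 < m → m ≤ n → gg d γ n ≤ gg d γ m := by
    intro m n _ hmn
    have hL := LL_pos hd m
    have h2 : LL d m ^ γ ≤ LL d n ^ γ :=
      Real.rpow_le_rpow (le_of_lt hL) (LL_mono hd hmn) hγ0
    have h3 : (0:ℝ) < (1 + 2*(m:ℝ)) * LL d m ^ γ := by positivity
    apply inv_anti₀ h3
    have h1 : (1 + 2*(m:ℝ)) ≤ (1 + 2*(n:ℝ)) := by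
      have : (m:ℝ) ≤ n := by exact_mod_cast hmn
      linarith
    have hp : (0:ℝ) < LL d m ^ γ := by positivity
    nlinarith
  rw [← summable_condensed_iff_of_nonneg (gg_nonneg hd γ) hanti]
  have hbound : ∀ n : ℕ, 2^n * gg d γ (2^n) ≤ (Real.log 2)⁻¹ ^ γ * (((n:ℝ)+1) ^ γ)⁻¹ := by
    intro n
    have h2n : (0:ℝ) < (2:ℝ)^n := by positivity
    have hcast : ((2^n : ℕ):ℝ) = (2:ℝ)^n := by push_cast; ring
    have hLL : ((n:ℝ)+1) * Real.log 2 ≤ LL d (2^n) := by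
      simp only [LL]
      rw [hcast]
      have hd' : (1:ℝ) ≤ (d:ℝ) := by exact_mod_cast hd
      have h1 : ((2:ℝ))^(n+1) ≤ (d:ℝ) + 2*((2^n : ℕ):ℝ) := by
        rw [hcast]; rw [pow_succ]; nlinarith
      have h2 : Real.log ((2:ℝ)^(n+1)) ≤ Real.log ((d:ℝ) + 2*((2^n:ℕ):ℝ)) :=
        Real.log_le_log (by positivity) h1
      rw [Real.log_pow] at h2
      push_cast at h2
      linarith
    have hLpos := LL_pos hd (2^n)
    have hbase : (0:ℝ) < ((n:ℝ)+1) * Real.log 2 := by positivity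
    have hrp : (((n:ℝ)+1) * Real.log 2) ^ γ ≤ LL d (2^n) ^ γ :=
      Real.rpow_le_rpow (le_of_lt hbase) hLL hγ0
    have hrppos : (0:ℝ) < (((n:ℝ)+1) * Real.log 2) ^ γ := Real.rpow_pos_of_pos hbase γ
    have key : gg d γ (2^n) ≤ ((2:ℝ)^n)⁻¹ * ((((n:ℝ)+1) * Real.log 2) ^ γ)⁻¹ := by
      simp only [gg]
      rw [mul_inv]
      have hLγpos : (0:ℝ) < LL d (2^n) ^ γ := Real.rpow_pos_of_pos hLpos γ
      have e1 : (1 + 2*((2^n:ℕ):ℝ))⁻¹ ≤ ((2:ℝ)^n)⁻¹ := by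
        apply inv_anti₀ h2n
        rw [hcast]; nlinarith
      have e2 : (LL d (2^n) ^ γ)⁻¹ ≤ ((((n:ℝ)+1) * Real.log 2) ^ γ)⁻¹ :=
        inv_anti₀ hrppos hrp
      have g2 : (0:ℝ) ≤ (LL d (2^n) ^ γ)⁻¹ := by positivity
      exact mul_le_mul e1 e2 g2 (by positivity)
    calc (2:ℝ)^n * gg d γ (2^n)
        ≤ (2:ℝ)^n * (((2:ℝ)^n)⁻¹ * ((((n:ℝ)+1) * Real.log 2) ^ γ)⁻¹) :=
          mul_le_mul_of_nonneg_left key (by positivity)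
      _ = ((((n:ℝ)+1) * Real.log 2) ^ γ)⁻¹ := by field_simp
      _ = (Real.log 2)⁻¹ ^ γ * (((n:ℝ)+1) ^ γ)⁻¹ := by
          rw [Real.mul_rpow (by positivity) (le_of_lt hlog2), mul_inv,
            ← Real.inv_rpow (le_of_lt hlog2)]
          ring
  have hsum : Summable fun n : ℕ => (Real.log 2)⁻¹ ^ γ * (((n:ℝ)+1) ^ γ)⁻¹ := by
    apply Summable.mul_left
    have h := (Real.summable_nat_rpow_inv (p := γ)).2 hγ
    have := (summable_nat_add_iff (f := fun n : ℕ => (((n:ℝ)) ^ γ)⁻¹) 1).2 h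
    simpa using this
  exact Summable.of_nonneg_of_le
    (fun n => by have := gg_nonneg hd γ (2^n); positivity) hbound hsum


noncomputable def ff (d : ℕ) (γ : ℝ) (k m : ℕ) : ℝ := (DD d k m * LL d m ^ γ)⁻¹

lemma ff_nonneg {d : ℕ} (hd : 1 ≤ d) (γ : ℝ) (k m : ℕ) : 0 ≤ ff d γ k m := by
  have h1 := DD_pos d k m
  have h2 := LL_pos hd m
  simp only [ff]; positivity

lemma harmonic_bound (k : ℕ) :
    ∑ t ∈ Finset.range k, (3 + 2*(t:ℝ))⁻¹ ≤ Real.log (2*(k:ℝ)+1) := by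
  have step : ∀ t : ℕ, (3+2*(t:ℝ))⁻¹ ≤
      Real.log (2*((t:ℝ)+1)+1) - Real.log (2*(t:ℝ)+1) := by
    intro t
    have h1 : (0:ℝ) < 2*(t:ℝ)+1 := by positivity
    have h3 : (0:ℝ) < 2*(t:ℝ)+3 := by positivity
    have hlog := Real.log_le_sub_one_of_pos
      (show (0:ℝ) < (2*(t:ℝ)+1)/(2*(t:ℝ)+3) by positivity)
    rw [Real.log_div (by positivity) (by positivity)] at hlog
    have h4 : (2*(t:ℝ)+1)/(2*(t:ℝ)+3) - 1 = -(2/(2*(t:ℝ)+3)) := by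
      field_simp
      norm_num
    have h5 : (3+2*(t:ℝ))⁻¹ ≤ 2/(2*(t:ℝ)+3) := by
      rw [div_eq_mul_inv]
      have : (3+2*(t:ℝ))⁻¹ = (2*(t:ℝ)+3)⁻¹ := by ring_nf
      rw [this]
      nlinarith [inv_pos.2 h3]
    have h6 : 2*((t:ℝ)+1)+1 = 2*(t:ℝ)+3 := by ring
    rw [h6]
    linarith
  calc ∑ t ∈ Finset.range k, (3 + 2*(t:ℝ))⁻¹
      ≤ ∑ t ∈ Finset.range k,
          (Real.log (2*((t:ℝ)+1)+1) - Real.log (2*(t:ℝ)+1)) :=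
        Finset.sum_le_sum (fun t _ => step t)
    _ = Real.log (2*(k:ℝ)+1) - Real.log (2*(0:ℝ)+1) := by
        have := Finset.sum_range_sub (fun t : ℕ => Real.log (2*(t:ℝ)+1)) k
        push_cast at this ⊢
        convert this using 2 <;> push_cast <;> ring_nf
    _ ≤ Real.log (2*(k:ℝ)+1) := by
        simp [Real.log_one]

lemma sum_near_le_two {d : ℕ} (hd : 1 ≤ d) {γ : ℝ} (hγ : 1 < γ) (k : ℕ) :
    ∑ m ∈ Finset.range k, ff d γ k m ≤ 2 := by
  classical
  have hγ0 : (0:ℝ) ≤ γ := by linarith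
  rw [← Finset.sum_filter_add_sum_filter_not (Finset.range k) (fun m => 2*m ≤ k)]
  have part1 : ∑ m ∈ (Finset.range k).filter (fun m => 2*m ≤ k), ff d γ k m ≤ 1 := by
    have hterm : ∀ m ∈ (Finset.range k).filter (fun m => 2*m ≤ k),
        ff d γ k m ≤ (1+(k:ℝ))⁻¹ := by
      intro m hm
      simp only [Finset.mem_filter, Finset.mem_range] at hm
      obtain ⟨hmk, h2m⟩ := hm
      have hDD : (1+(k:ℝ)) ≤ DD d k m := by
        rw [DD_sub (le_of_lt hmk)]
        have h2m' : 2*(m:ℝ) ≤ (k:ℝ) := by exact_mod_cast h2m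
        linarith
      have hLL : (1:ℝ) ≤ LL d m ^ γ := Real.one_le_rpow (one_le_LL hd m) hγ0
      have hpos : (0:ℝ) < 1 + (k:ℝ) := by positivity
      apply inv_anti₀ hpos
      nlinarith [DD_pos d k m]
    calc ∑ m ∈ (Finset.range k).filter (fun m => 2*m ≤ k), ff d γ k m
        ≤ ∑ _m ∈ (Finset.range k).filter (fun m => 2*m ≤ k), (1+(k:ℝ))⁻¹ :=
          Finset.sum_le_sum hterm
      _ = ((Finset.range k).filter (fun m => 2*m ≤ k)).card * (1+(k:ℝ))⁻¹ := by
          rw [Finset.sum_const, nsmul_eq_mul]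
      _ ≤ (k:ℝ) * (1+(k:ℝ))⁻¹ := by
          have hcard : ((Finset.range k).filter (fun m => 2*m ≤ k)).card ≤ k := by
            calc ((Finset.range k).filter (fun m => 2*m ≤ k)).card
                ≤ (Finset.range k).card := Finset.card_filter_le _ _
              _ = k := Finset.card_range k
          have : (((Finset.range k).filter (fun m => 2*m ≤ k)).card : ℝ) ≤ (k:ℝ) := by
            exact_mod_cast hcard
          have hpos : (0:ℝ) ≤ (1+(k:ℝ))⁻¹ := by positivity
          nlinarith
      _ ≤ 1 := by
          rw [mul_inv_le_iff₀ (by positivity)]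
          linarith
  have part2 : ∑ m ∈ (Finset.range k).filter (fun m => ¬ 2*m ≤ k), ff d γ k m ≤ 1 := by
    set P : ℝ := 1 + Real.log ((k:ℝ)+1) with hP
    have hP1 : (1:ℝ) ≤ P := by
      have := Real.log_nonneg (show (1:ℝ) ≤ (k:ℝ)+1 by
        linarith [Nat.cast_nonneg (α := ℝ) k])
      simp only [hP]; linarith
    have hPpos : (0:ℝ) < P := by linarith
    have hPγ : (0:ℝ) < P ^ γ := Real.rpow_pos_of_pos hPpos γ
    have hterm : ∀ m ∈ (Finset.range k).filter (fun m => ¬ 2*m ≤ k),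
        ff d γ k m ≤ (DD d k m)⁻¹ * (P ^ γ)⁻¹ := by
      intro m hm
      simp only [Finset.mem_filter, Finset.mem_range, not_le] at hm
      obtain ⟨hmk, h2m⟩ := hm
      have hLLm : P ≤ LL d m := by
        simp only [hP, LL]
        have harg : (k:ℝ)+1 ≤ (d:ℝ) + 2*m := by
          have h2m' : (k:ℝ)+1 ≤ 2*(m:ℝ) := by
            have : k+1 ≤ 2*m := h2m
            exact_mod_cast this
          have hd' : (1:ℝ) ≤ (d:ℝ) := by exact_mod_cast hd
          linarith
        have := Real.log_le_log (by positivity) harg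
        linarith
      have hrp : P ^ γ ≤ LL d m ^ γ := Real.rpow_le_rpow (le_of_lt hPpos) hLLm hγ0
      simp only [ff]
      rw [mul_inv]
      exact mul_le_mul_of_nonneg_left (inv_anti₀ hPγ hrp)
        (le_of_lt (inv_pos.2 (DD_pos d k m)))
    have hsumDD : ∑ m ∈ (Finset.range k).filter (fun m => ¬ 2*m ≤ k), (DD d k m)⁻¹
        ≤ P := by
      calc ∑ m ∈ (Finset.range k).filter (fun m => ¬ 2*m ≤ k), (DD d k m)⁻¹
          ≤ ∑ m ∈ Finset.range k, (DD d k m)⁻¹ := by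
            apply Finset.sum_le_sum_of_subset_of_nonneg (Finset.filter_subset _ _)
            intro m _ _
            exact le_of_lt (inv_pos.2 (DD_pos d k m))
        _ = ∑ t ∈ Finset.range k, (3 + 2*(t:ℝ))⁻¹ := by
            rw [← Finset.sum_range_reflect (fun t => (3 + 2*(t:ℝ))⁻¹) k]
            apply Finset.sum_congr rfl
            intro m hm
            rw [Finset.mem_range] at hm
            rw [DD_sub (le_of_lt hm)]
            congr 1
            have hcast : ((k - 1 - m : ℕ):ℝ) = (k:ℝ) - 1 - m := by
              have h1 : m + 1 ≤ k := hm
              have : (k - 1 - m : ℕ) = k - (m+1) := by omega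
              rw [this]
              push_cast [Nat.cast_sub h1]
              ring
            rw [hcast]
            ring
        _ ≤ Real.log (2*(k:ℝ)+1) := harmonic_bound k
        _ ≤ P := by
            have h1 : Real.log (2*(k:ℝ)+1) ≤ Real.log (2*((k:ℝ)+1)) :=
              Real.log_le_log (by positivity) (by linarith)
            rw [Real.log_mul (by norm_num) (by positivity)] at h1
            have hl2 : Real.log 2 ≤ 1 := by
              have := Real.log_le_sub_one_of_pos (show (0:ℝ) < 2 by norm_num)
              linarith
            simp only [hP]
            linarith
    calc ∑ m ∈ (Finset.range k).filter (fun m => ¬ 2*m ≤ k), ff d γ k m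
        ≤ ∑ m ∈ (Finset.range k).filter (fun m => ¬ 2*m ≤ k),
            (DD d k m)⁻¹ * (P ^ γ)⁻¹ := Finset.sum_le_sum hterm
      _ = (∑ m ∈ (Finset.range k).filter (fun m => ¬ 2*m ≤ k), (DD d k m)⁻¹) * (P ^ γ)⁻¹ := by
          rw [Finset.sum_mul]
      _ ≤ P * (P ^ γ)⁻¹ := by
          apply mul_le_mul_of_nonneg_right hsumDD (by positivity)
      _ = P ^ (1 - γ) := by
          rw [Real.rpow_sub hPpos, Real.rpow_one, div_eq_mul_inv]
      _ ≤ 1 := Real.rpow_le_one_of_one_le_of_nonpos hP1 (by linarith)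
  exact le_trans (add_le_add part1 part2) (by norm_num)

lemma sum_range_ff_le {d : ℕ} (hd : 1 ≤ d) {γ : ℝ} (hγ : 1 < γ) (k n : ℕ) :
    ∑ m ∈ Finset.range n, ff d γ k m ≤ 2 + ∑' t, gg d γ t := by
  have hγ0 : (0:ℝ) ≤ γ := by linarith
  have hgg := gg_summable hd hγ
  have htsum_nonneg : (0:ℝ) ≤ ∑' t, gg d γ t := tsum_nonneg (gg_nonneg hd γ)
  by_cases hn : n ≤ k
  · calc ∑ m ∈ Finset.range n, ff d γ k m
        ≤ ∑ m ∈ Finset.range k, ff d γ k m := by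
          apply Finset.sum_le_sum_of_subset_of_nonneg
            (Finset.range_subset_range.2 hn)
          intro m _ _; exact ff_nonneg hd γ k m
      _ ≤ 2 := sum_near_le_two hd hγ k
      _ ≤ 2 + ∑' t, gg d γ t := by linarith
  · push_neg at hn
    have hkn : k ≤ n := le_of_lt hn
    have hsplit : ∑ m ∈ Finset.range n, ff d γ k m =
        ∑ m ∈ Finset.range k, ff d γ k m + ∑ m ∈ Finset.Ico k n, ff d γ k m := by
      simp only [Finset.range_eq_Ico]
      exact (Finset.sum_Ico_consecutive _ (Nat.zero_le k) hkn).symm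
    rw [hsplit]
    have htail : ∑ m ∈ Finset.Ico k n, ff d γ k m ≤ ∑' t, gg d γ t := by
      rw [Finset.sum_Ico_eq_sum_range]
      have hterm : ∀ t, ff d γ k (k + t) ≤ gg d γ t := by
        intro t
        simp only [ff, gg]
        rw [DD_add]
        apply inv_anti₀
        · have := LL_pos hd t
          positivity
        · apply mul_le_mul_of_nonneg_left
            (Real.rpow_le_rpow (le_of_lt (LL_pos hd t)) (LL_mono hd (Nat.le_add_left t k)) hγ0)
            (by positivity)
      calc ∑ t ∈ Finset.range (n - k), ff d γ k (k + t)
          ≤ ∑ t ∈ Finset.range (n - k), gg d γ t :=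
            Finset.sum_le_sum (fun t _ => hterm t)
        _ ≤ ∑' t, gg d γ t := Summable.sum_le_tsum _ (fun t _ => gg_nonneg hd γ t) hgg
    linarith [sum_near_le_two hd hγ k]

lemma ff_summable {d : ℕ} (hd : 1 ≤ d) {γ : ℝ} (hγ : 1 < γ) (k : ℕ) :
    Summable (ff d γ k) :=
  summable_of_sum_range_le (fun m => ff_nonneg hd γ k m) (sum_range_ff_le hd hγ k)

lemma ff_tsum_le {d : ℕ} (hd : 1 ≤ d) {γ : ℝ} (hγ : 1 < γ) (k : ℕ) :
    ∑' m, ff d γ k m ≤ 2 + ∑' t, gg d γ t :=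
  Summable.tsum_le_of_sum_range_le (ff_summable hd hγ k) (sum_range_ff_le hd hγ k)


section Infra

abbrev Euc (d k : ℕ) := EuclideanSpace ℂ (Fin (hermiteDim d (d + 2 * k)))
noncomputable abbrev Hsp (d : ℕ) := lp (fun _ : IndexE d => ℂ) 2

variable {d : ℕ}

lemma rpow_toReal_two (x : ℝ) (hx : 0 ≤ x) : x ^ (2:ℝ≥0∞).toReal = x ^ 2 := by
  have h : (2:ℝ≥0∞).toReal = ((2:ℕ):ℝ) := by norm_num
  rw [h, Real.rpow_natCast]

lemma le_of_sq_le_sq {a b : ℝ} (hb : 0 ≤ b) (h : a^2 ≤ b^2) (ha : 0 ≤ a) : a ≤ b := by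
  nlinarith

lemma summable_sq (ξ : Hsp d) : Summable fun a : IndexE d => ‖ξ a‖^2 := by
  have h := (lp.memℓp ξ).summable (by norm_num : 0 < (2:ℝ≥0∞).toReal)
  apply h.congr
  intro a
  exact rpow_toReal_two _ (norm_nonneg _)

lemma norm_sq_eq_tsum (ξ : Hsp d) : ‖ξ‖^2 = ∑' a : IndexE d, ‖ξ a‖^2 := by
  have h := lp.norm_rpow_eq_tsum (by norm_num : 0 < (2:ℝ≥0∞).toReal) ξ
  rw [rpow_toReal_two _ (norm_nonneg _)] at h
  rw [h]
  exact tsum_congr fun a => rpow_toReal_two _ (norm_nonneg _)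

lemma euc_norm_sq {n : ℕ} (v : EuclideanSpace ℂ (Fin n)) : ‖v‖^2 = ∑ l, ‖v l‖^2 := by
  rw [EuclideanSpace.norm_eq, Real.sq_sqrt]
  positivity

/-- the embedding of the k-th block into the index set -/
def blkEmb (d k : ℕ) : Fin (hermiteDim d (d + 2 * k)) ↪ IndexE d where
  toFun l := ⟨k, l⟩
  inj' l l' h := by simpa using h

lemma single_coe (i : IndexE d) (c : ℂ) (j : IndexE d) :
    ((lp.single 2 i c : Hsp d) : ∀ _ : IndexE d, ℂ) j = if j = i then c else 0 := by
  rw [lp.single_apply]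
  by_cases h : j = i
  · subst h; simp
  · simp [h]

noncomputable def projL (d k : ℕ) : Hsp d →ₗ[ℂ] Euc d k where
  toFun ξ := WithLp.toLp 2 (fun l => ξ ⟨k, l⟩)
  map_add' ξ η := PiLp.ext fun l => by
    show ((ξ + η : Hsp d) : ∀ _, ℂ) ⟨k, l⟩ = (ξ : ∀ _, ℂ) ⟨k, l⟩ + (η : ∀ _, ℂ) ⟨k, l⟩
    rw [lp.coeFn_add]; rfl
  map_smul' c ξ := PiLp.ext fun l => by
    show ((c • ξ : Hsp d) : ∀ _, ℂ) ⟨k, l⟩ = c • ((ξ : ∀ _, ℂ) ⟨k, l⟩)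
    rw [lp.coeFn_smul]; rfl

lemma projL_apply (k : ℕ) (ξ : Hsp d) (l : Fin (hermiteDim d (d + 2 * k))) :
    projL d k ξ l = ξ ⟨k, l⟩ := rfl

lemma projL_norm (k : ℕ) (ξ : Hsp d) : ‖projL d k ξ‖ ≤ ‖ξ‖ := by
  apply le_of_sq_le_sq (norm_nonneg _) _ (norm_nonneg _)
  rw [euc_norm_sq, norm_sq_eq_tsum]
  calc ∑ l, ‖projL d k ξ l‖^2
      = ∑ a ∈ Finset.univ.map (blkEmb d k), ‖ξ a‖^2 := by
        rw [Finset.sum_map]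
        exact Finset.sum_congr rfl fun l _ => rfl
    _ ≤ ∑' a : IndexE d, ‖ξ a‖^2 :=
        Summable.sum_le_tsum _ (fun a _ => by positivity) (summable_sq ξ)

noncomputable def projCLM (d k : ℕ) : Hsp d →L[ℂ] Euc d k :=
  (projL d k).mkContinuous 1 (fun ξ => by rw [one_mul]; exact projL_norm k ξ)

lemma projCLM_apply (k : ℕ) (ξ : Hsp d) (l : Fin (hermiteDim d (d + 2 * k))) :
    projCLM d k ξ l = ξ ⟨k, l⟩ := rfl

lemma projCLM_norm (k : ℕ) : ‖projCLM d k‖ ≤ 1 :=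
  LinearMap.mkContinuous_norm_le _ zero_le_one _

lemma lp_single_add (i : IndexE d) (x y : ℂ) :
    (lp.single 2 i (x + y) : Hsp d) = lp.single 2 i x + lp.single 2 i y := by
  apply lp.ext
  funext j
  rw [lp.coeFn_add, Pi.add_apply, single_coe, single_coe, single_coe]
  by_cases h : j = i <;> simp [h]

noncomputable def inclL (d k : ℕ) : Euc d k →ₗ[ℂ] Hsp d where
  toFun v := ∑ l, (lp.single 2 (⟨k, l⟩ : IndexE d) (v l) : Hsp d)
  map_add' u v := by
    show (∑ l, (lp.single 2 (⟨k, l⟩ : IndexE d) ((u + v) l) : Hsp d))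
      = (∑ l, (lp.single 2 (⟨k, l⟩ : IndexE d) (u l) : Hsp d))
        + ∑ l, (lp.single 2 (⟨k, l⟩ : IndexE d) (v l) : Hsp d)
    rw [← Finset.sum_add_distrib]
    exact Finset.sum_congr rfl fun l _ => lp_single_add _ _ _
  map_smul' c v := by
    show (∑ l, (lp.single 2 (⟨k, l⟩ : IndexE d) ((c • v) l) : Hsp d))
      = c • ∑ l, (lp.single 2 (⟨k, l⟩ : IndexE d) (v l) : Hsp d)
    rw [Finset.smul_sum]
    refine Finset.sum_congr rfl fun l _ => ?_
    exact lp.single_smul (E := fun _ : IndexE d => ℂ) 2 (⟨k, l⟩ : IndexE d) c (v l)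

lemma inclL_apply (k : ℕ) (v : Euc d k) :
    inclL d k v = ∑ l, lp.single 2 (⟨k, l⟩ : IndexE d) (v l) := rfl

lemma inclL_coe (k : ℕ) (v : Euc d k) (a : IndexE d) :
    (inclL d k v : ∀ _ : IndexE d, ℂ) a
      = ∑ l, (if a = (⟨k, l⟩ : IndexE d) then v l else 0) := by
  rw [inclL_apply, lp.coeFn_sum, Finset.sum_apply]
  exact Finset.sum_congr rfl fun l _ => single_coe _ _ _

lemma inclL_apply_self (k : ℕ) (v : Euc d k) (l₀ : Fin (hermiteDim d (d + 2 * k))) :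
    (inclL d k v : ∀ _ : IndexE d, ℂ) ⟨k, l₀⟩ = v l₀ := by
  rw [inclL_coe]
  have h : ∀ l, ((⟨k, l₀⟩ : IndexE d) = ⟨k, l⟩) ↔ l₀ = l := by
    intro l; simp
  simp_rw [h]
  simp

lemma inclL_apply_ne (k : ℕ) (v : Euc d k) (a : IndexE d) (h : a.1 ≠ k) :
    (inclL d k v : ∀ _ : IndexE d, ℂ) a = 0 := by
  rw [inclL_coe]
  apply Finset.sum_eq_zero
  intro l _
  rw [if_neg]
  intro hc
  exact h (congrArg Sigma.fst hc)

lemma inclL_norm (k : ℕ) (v : Euc d k) : ‖inclL d k v‖ = ‖v‖ := by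
  have h2 : (0:ℝ) < (2:ℝ≥0∞).toReal := by norm_num
  have key : ‖inclL d k v‖ ^ (2:ℝ≥0∞).toReal = ‖v‖ ^ (2:ℝ≥0∞).toReal := by
    have hs : (inclL d k v : Hsp d) =
        ∑ a ∈ Finset.univ.map (blkEmb d k), lp.single 2 a ((inclL d k v : ∀ _, ℂ) a) := by
      rw [Finset.sum_map]
      show inclL d k v = ∑ l, lp.single 2 (⟨k,l⟩ : IndexE d) ((inclL d k v : ∀ _, ℂ) ⟨k,l⟩)
      have : ∀ l, ((inclL d k v : ∀ _, ℂ) (⟨k,l⟩ : IndexE d)) = v l :=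
        fun l => inclL_apply_self k v l
      simp_rw [this]
      rfl
    rw [hs, lp.norm_sum_single h2, Finset.sum_map]
    rw [rpow_toReal_two _ (norm_nonneg _), euc_norm_sq]
    apply Finset.sum_congr rfl
    intro l _
    rw [show (blkEmb d k) l = (⟨k,l⟩ : IndexE d) from rfl, inclL_apply_self]
    exact rpow_toReal_two _ (norm_nonneg _)
  rw [rpow_toReal_two _ (norm_nonneg _), rpow_toReal_two _ (norm_nonneg _)] at key
  have h1 := le_of_sq_le_sq (norm_nonneg (v : Euc d k)) (le_of_eq key) (norm_nonneg _)
  have h2' := le_of_sq_le_sq (norm_nonneg (inclL d k v)) (le_of_eq key.symm) (norm_nonneg _)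
  linarith

noncomputable def inclCLM (d k : ℕ) : Euc d k →L[ℂ] Hsp d :=
  (inclL d k).mkContinuous 1 (fun v => by rw [one_mul, inclL_norm])

lemma inclCLM_norm (k : ℕ) : ‖inclCLM d k‖ ≤ 1 :=
  LinearMap.mkContinuous_norm_le _ zero_le_one _

end Infra


section OpBlk
variable {d : ℕ}

/-- The block `(k,k')` of an operator on `Hsp d`. -/
noncomputable def opBlk (d k k' : ℕ) (T : Hsp d →L[ℂ] Hsp d) : Euc d k' →L[ℂ] Euc d k :=
  (projCLM d k).comp (T.comp (inclCLM d k'))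

lemma opBlk_norm_le (k k' : ℕ) (T : Hsp d →L[ℂ] Hsp d) : ‖opBlk d k k' T‖ ≤ ‖T‖ := by
  calc ‖opBlk d k k' T‖ ≤ ‖projCLM d k‖ * ‖T.comp (inclCLM d k')‖ :=
        ContinuousLinearMap.opNorm_comp_le _ _
    _ ≤ ‖projCLM d k‖ * (‖T‖ * ‖inclCLM d k'‖) := by
        apply mul_le_mul_of_nonneg_left (ContinuousLinearMap.opNorm_comp_le _ _) (norm_nonneg _)
    _ ≤ 1 * (‖T‖ * 1) := by
        apply mul_le_mul (projCLM_norm k)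
          (mul_le_mul_of_nonneg_left (inclCLM_norm k') (norm_nonneg _))
          (by positivity) zero_le_one
    _ = ‖T‖ := by ring

noncomputable def opBlkL (d k k' : ℕ) :
    (Hsp d →L[ℂ] Hsp d) →ₗ[ℂ] (Euc d k' →L[ℂ] Euc d k) where
  toFun T := opBlk d k k' T
  map_add' S T := by
    ext v
    simp [opBlk]
  map_smul' c T := by
    ext v
    simp [opBlk]

noncomputable def opBlkCLM (d k k' : ℕ) :
    (Hsp d →L[ℂ] Hsp d) →L[ℂ] (Euc d k' →L[ℂ] Euc d k) :=
  (opBlkL d k k').mkContinuous 1 (fun T => by rw [one_mul]; exact opBlk_norm_le k k' T)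

lemma opBlkCLM_apply (k k' : ℕ) (T : Hsp d →L[ℂ] Hsp d) :
    opBlkCLM d k k' T = opBlk d k k' T := rfl

/-- Matrix entries of an operator. -/
noncomputable def matEnt (T : Hsp d →L[ℂ] Hsp d) (a b : IndexE d) : ℂ :=
  T (lp.single 2 b 1) a

lemma single_eq_smul_single (b : IndexE d) (c : ℂ) :
    (lp.single 2 b c : Hsp d) = c • (lp.single 2 b 1 : Hsp d) := by
  rw [← lp.single_smul (E := fun _ : IndexE d => ℂ) 2 b c 1, smul_eq_mul, mul_one]

lemma apply_single_coord (T : Hsp d →L[ℂ] Hsp d) (a b : IndexE d) (c : ℂ) :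
    T (lp.single 2 b c) a = matEnt T a b * c := by
  rw [single_eq_smul_single, map_smul, lp.coeFn_smul, Pi.smul_apply, smul_eq_mul, matEnt,
    mul_comm]

lemma opBlk_eq_matBlock (T : Hsp d →L[ℂ] Hsp d) (k k' : ℕ) :
    (LinearMap.toContinuousLinearMap (Matrix.toEuclideanLin
      (Matrix.of fun (i : Fin (hermiteDim d (d + 2 * k)))
        (i' : Fin (hermiteDim d (d + 2 * k'))) => matEnt T ⟨k, i⟩ ⟨k', i'⟩)))
      = opBlk d k k' T := by
  apply ContinuousLinearMap.ext
  intro v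
  ext l
  have lhs : (LinearMap.toContinuousLinearMap (Matrix.toEuclideanLin
      (Matrix.of fun i i' => matEnt T ⟨k, i⟩ ⟨k', i'⟩))) v l
      = ∑ l', matEnt T ⟨k, l⟩ ⟨k', l'⟩ * v l' := by
    show (Matrix.toEuclideanLin (Matrix.of fun i i' => matEnt T ⟨k, i⟩ ⟨k', i'⟩)) v l = _
    rw [Matrix.toEuclideanLin_apply]
    show ((Matrix.of fun i i' => matEnt T ⟨k, i⟩ ⟨k', i'⟩).mulVec fun l' => v l') l = _
    simp [Matrix.mulVec, dotProduct]
  rw [lhs]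
  show _ = T (inclCLM d k' v) ⟨k, l⟩
  have hincl : (inclCLM d k' v : Hsp d) = ∑ l', (lp.single 2 (⟨k', l'⟩ : IndexE d) (v l') : Hsp d) :=
    inclL_apply k' v
  rw [hincl, map_sum]
  rw [show ((∑ l', T (lp.single 2 (⟨k', l'⟩ : IndexE d) (v l')) : Hsp d) : ∀ _ : IndexE d, ℂ) ⟨k, l⟩
      = ∑ l', (T (lp.single 2 (⟨k', l'⟩ : IndexE d) (v l')) : ∀ _ : IndexE d, ℂ) ⟨k, l⟩ by
    rw [lp.coeFn_sum, Finset.sum_apply]]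
  exact Finset.sum_congr rfl fun l' _ => (apply_single_coord T _ _ _).symm

lemma blockNorm_matEnt (T : Hsp d →L[ℂ] Hsp d) (k k' : ℕ) :
    blockNorm d (matEnt T) k k' = ‖opBlk d k k' T‖ := by
  unfold blockNorm
  rw [opBlk_eq_matBlock]

noncomputable def evalCLM (d : ℕ) (a : IndexE d) : Hsp d →L[ℂ] ℂ :=
  LinearMap.mkContinuous
    { toFun := fun ξ => ξ a
      map_add' := fun ξ η => by
        show ((ξ + η : Hsp d) : ∀ _, ℂ) a = (ξ : ∀ _, ℂ) a + (η : ∀ _, ℂ) a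
        rw [lp.coeFn_add]; rfl
      map_smul' := fun c ξ => by
        show ((c • ξ : Hsp d) : ∀ _, ℂ) a = c • ((ξ : ∀ _, ℂ) a)
        rw [lp.coeFn_smul]; rfl }
    1 (fun ξ => by
      rw [one_mul]
      exact lp.norm_apply_le_norm (by norm_num : (2:ℝ≥0∞) ≠ 0) ξ a)

lemma evalCLM_apply (a : IndexE d) (ξ : Hsp d) : evalCLM d a ξ = ξ a := rfl

lemma hasSum_entries (S : Hsp d →L[ℂ] Hsp d) (ξ : Hsp d) (a : IndexE d) :
    HasSum (fun b : IndexE d => matEnt S a b * ξ b) (S ξ a) := by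
  have h := lp.hasSum_single (by norm_num : (2:ℝ≥0∞) ≠ ⊤) ξ
  have h2 := ((evalCLM d a).comp S).hasSum h
  have heq : (fun b : IndexE d => ((evalCLM d a).comp S) (lp.single 2 b (ξ b)))
      = fun b : IndexE d => matEnt S a b * ξ b := by
    funext b
    show S (lp.single 2 b (ξ b)) a = _
    exact apply_single_coord S a b (ξ b)
  rw [heq] at h2
  exact h2

lemma hasSum_blocks (η : Hsp d) :
    HasSum (fun k : ℕ => inclCLM d k (projCLM d k η)) η := by
  have h := lp.hasSum_single (by norm_num : (2:ℝ≥0∞) ≠ ⊤) η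
  apply HasSum.sigma h
  intro k
  have hfin := hasSum_fintype (fun l => (lp.single 2 (⟨k, l⟩ : IndexE d) (η ⟨k, l⟩) : Hsp d))
  convert hfin using 1
  rfl

end OpBlk

section Weights

noncomputable def cw (d : ℕ) (β : ℝ) (k k' : ℕ) : ℝ := (wtBetaPlus d β k k')⁻¹

noncomputable def Kc (d : ℕ) (β : ℝ) : ℝ := 2 + ∑' t, gg d (2*β) t

variable {d : ℕ} {β : ℝ}

lemma wtBetaPlus_eq (k k' : ℕ) :
    wtBetaPlus d β k k' = DD d k k' * (LL d k ^ β * LL d k' ^ β) := rfl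

lemma wt_pos (hd : 1 ≤ d) (k k' : ℕ) : 0 < wtBetaPlus d β k k' := by
  rw [wtBetaPlus_eq]
  have h1 := DD_pos d k k'
  have h2 := Real.rpow_pos_of_pos (LL_pos hd k) β
  have h3 := Real.rpow_pos_of_pos (LL_pos hd k') β
  positivity

lemma cw_pos (hd : 1 ≤ d) (k k' : ℕ) : 0 < cw d β k k' := inv_pos.2 (wt_pos hd k k')

lemma wt_mul_cw (hd : 1 ≤ d) (k k' : ℕ) : wtBetaPlus d β k k' * cw d β k k' = 1 :=
  mul_inv_cancel₀ (ne_of_gt (wt_pos hd k k'))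

lemma one_le_rpowLL (hd : 1 ≤ d) (hβ : 0 ≤ β) (k : ℕ) : 1 ≤ LL d k ^ β :=
  Real.one_le_rpow (one_le_LL hd k) hβ

lemma rpowLL_sq (hd : 1 ≤ d) (k : ℕ) : (LL d k ^ β) * (LL d k ^ β) = LL d k ^ (2*β) := by
  rw [← Real.rpow_add (LL_pos hd k)]
  ring_nf

lemma ff_le_one (hd : 1 ≤ d) (hγ : 0 ≤ γ) (k k' : ℕ) : ff d γ k k' ≤ 1 := by
  rw [ff]
  have h1 := one_le_DD d k k'
  have h2 : (1:ℝ) ≤ LL d k' ^ γ := Real.one_le_rpow (one_le_LL hd k') hγ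
  rw [show (1:ℝ) = 1⁻¹ by norm_num]
  apply inv_anti₀ (by norm_num)
  nlinarith

lemma cw_sq_eq (hd : 1 ≤ d) (k k' : ℕ) :
    cw d β k k' ^ 2 = ff d (2*β) k k' * ff d (2*β) k' k := by
  simp only [cw, wtBetaPlus_eq, ff]
  rw [DD_comm d k' k, ← mul_inv, sq, ← mul_inv]
  congr 1
  rw [← rpowLL_sq hd (β := β) k, ← rpowLL_sq hd (β := β) k']
  ring

lemma cw_sq_le (hd : 1 ≤ d) (hβ : 0 ≤ β) (k k' : ℕ) :
    cw d β k k' ^ 2 ≤ ff d (2*β) k k' := by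
  rw [cw_sq_eq hd]
  have h2 := ff_le_one hd (by linarith : (0:ℝ) ≤ 2*β) k' k
  have h3 := ff_nonneg hd (2*β) k k'
  have h4 := ff_nonneg hd (2*β) k' k
  nlinarith

lemma one_le_Kc (hd : 1 ≤ d) (hβ : 1/2 < β) : 1 ≤ Kc d β := by
  have : 0 ≤ ∑' t, gg d (2*β) t := tsum_nonneg (gg_nonneg hd (2*β))
  rw [Kc]; linarith

lemma hγ2 (hβ : 1/2 < β) : 1 < 2*β := by linarith

lemma row_sum_le (hd : 1 ≤ d) (hβ : 1/2 < β) (k : ℕ) :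
    ∑' m, ff d (2*β) k m ≤ Kc d β :=
  ff_tsum_le hd (hγ2 hβ) k

lemma aux_chain {a b c p q r : ℝ} (ha : 0 < a) (hb : 0 < b) (hc : 0 < c)
    (hp : 0 < p) (hq : 0 < q) (hr : 0 < r) (hcab : c ≤ a + b) :
    (a * (p * r))⁻¹ * (b * (r * q))⁻¹ ≤
      (c * (p * q))⁻¹ * ((a * (r*r))⁻¹ + (b * (r*r))⁻¹) := by
  set X : ℝ := (a*b*c*p*q*(r*r))⁻¹ with hX
  have hXpos : 0 < X := by rw [hX]; positivity
  have hL : (a * (p * r))⁻¹ * (b * (r * q))⁻¹ = c * X := by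
    rw [hX]
    field_simp
  have hR : (c * (p * q))⁻¹ * ((a * (r*r))⁻¹ + (b * (r*r))⁻¹) = (a + b) * X := by
    rw [hX]
    field_simp
    ring
  rw [hL, hR]
  exact mul_le_mul_of_nonneg_right hcab (le_of_lt hXpos)

lemma cw_chain (hd : 1 ≤ d) (k1 k2 k : ℕ) :
    cw d β k1 k * cw d β k k2 ≤
      cw d β k1 k2 * (ff d (2*β) k1 k + ff d (2*β) k2 k) := by
  have h1 : ff d (2*β) k1 k = (DD d k1 k * (LL d k ^ β * LL d k ^ β))⁻¹ := by
    rw [ff, rpowLL_sq hd]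
  have h2 : ff d (2*β) k2 k = (DD d k k2 * (LL d k ^ β * LL d k ^ β))⁻¹ := by
    rw [ff, rpowLL_sq hd, DD_comm]
  simp only [cw, wtBetaPlus_eq, h1, h2]
  have := aux_chain (DD_pos d k1 k) (DD_pos d k k2) (DD_pos d k1 k2)
    (Real.rpow_pos_of_pos (LL_pos hd k1) β) (Real.rpow_pos_of_pos (LL_pos hd k2) β)
    (Real.rpow_pos_of_pos (LL_pos hd k) β) (DD_triangle d k1 k k2)
  calc (DD d k1 k * (LL d k1 ^ β * LL d k ^ β))⁻¹ * (DD d k k2 * (LL d k ^ β * LL d k2 ^ β))⁻¹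
      ≤ (DD d k1 k2 * (LL d k1 ^ β * LL d k2 ^ β))⁻¹ *
        ((DD d k1 k * (LL d k ^ β * LL d k ^ β))⁻¹ + (DD d k k2 * (LL d k ^ β * LL d k ^ β))⁻¹) :=
        this
    _ = _ := rfl

lemma summable_cw_mul_cw (hd : 1 ≤ d) (hβ : 1/2 < β) (k1 k2 : ℕ) :
    Summable (fun k => cw d β k1 k * cw d β k k2) := by
  apply Summable.of_nonneg_of_le
    (fun k => le_of_lt (mul_pos (cw_pos hd k1 k) (cw_pos hd k k2)))
    (fun k => cw_chain hd k1 k2 k)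
  exact ((ff_summable hd (hγ2 hβ) k1).add (ff_summable hd (hγ2 hβ) k2)).mul_left _

lemma tsum_cw_mul_cw_le (hd : 1 ≤ d) (hβ : 1/2 < β) (k1 k2 : ℕ) :
    ∑' k, cw d β k1 k * cw d β k k2 ≤ 2 * Kc d β * cw d β k1 k2 := by
  have hsum := ((ff_summable hd (hγ2 hβ) k1).add (ff_summable hd (hγ2 hβ) k2)).mul_left
    (cw d β k1 k2)
  calc ∑' k, cw d β k1 k * cw d β k k2
      ≤ ∑' k, cw d β k1 k2 * (ff d (2*β) k1 k + ff d (2*β) k2 k) :=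
        Summable.tsum_le_tsum (cw_chain hd k1 k2) (summable_cw_mul_cw hd hβ k1 k2) hsum
    _ = cw d β k1 k2 * ∑' k, (ff d (2*β) k1 k + ff d (2*β) k2 k) := tsum_mul_left
    _ = cw d β k1 k2 * (∑' k, ff d (2*β) k1 k + ∑' k, ff d (2*β) k2 k) := by
        rw [Summable.tsum_add (ff_summable hd (hγ2 hβ) k1) (ff_summable hd (hγ2 hβ) k2)]
    _ ≤ cw d β k1 k2 * (Kc d β + Kc d β) := by
        apply mul_le_mul_of_nonneg_left _ (le_of_lt (cw_pos hd k1 k2))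
        exact add_le_add (row_sum_le hd hβ k1) (row_sum_le hd hβ k2)
    _ = 2 * Kc d β * cw d β k1 k2 := by ring

end Weights

section Schur
variable {d : ℕ} {β : ℝ}

lemma matCLM_apply {m n : ℕ} (B : Matrix (Fin m) (Fin n) ℂ)
    (v : EuclideanSpace ℂ (Fin n)) (l : Fin m) :
    (LinearMap.toContinuousLinearMap (Matrix.toEuclideanLin B)) v l = ∑ l', B l l' * v l' := by
  show (Matrix.toEuclideanLin B) v l = _
  rw [Matrix.toEuclideanLin_apply]
  show (B.mulVec fun l' => v l') l = _
  simp [Matrix.mulVec, dotProduct]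

lemma euc_coord_le {n : ℕ} (v : EuclideanSpace ℂ (Fin n)) (l : Fin n) : ‖v l‖ ≤ ‖v‖ := by
  apply le_of_sq_le_sq (norm_nonneg _) _ (norm_nonneg _)
  rw [euc_norm_sq]
  exact Finset.single_le_sum (f := fun l => ‖v l‖^2) (fun i _ => by positivity)
    (Finset.mem_univ l)

/-- The `(k,k')` block of a matrix, as an operator between Euclidean spaces. -/
noncomputable def matBlockCLM (A : IndexE d → IndexE d → ℂ) (k k' : ℕ) :
    Euc d k' →L[ℂ] Euc d k :=
  LinearMap.toContinuousLinearMap (Matrix.toEuclideanLin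
    (Matrix.of fun (i : Fin (hermiteDim d (d + 2 * k)))
      (i' : Fin (hermiteDim d (d + 2 * k'))) => A ⟨k, i⟩ ⟨k', i'⟩))

lemma blockNorm_eq_matBlockCLM (A : IndexE d → IndexE d → ℂ) (k k' : ℕ) :
    blockNorm d A k k' = ‖matBlockCLM A k k'‖ := rfl

lemma matBlockCLM_coord (A : IndexE d → IndexE d → ℂ) (k k' : ℕ) (v : Euc d k')
    (l : Fin (hermiteDim d (d + 2 * k))) :
    matBlockCLM A k k' v l = ∑ l', A ⟨k, l⟩ ⟨k', l'⟩ * v l' :=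
  matCLM_apply _ v l

lemma rowsq_le (A : IndexE d → IndexE d → ℂ) (k k' : ℕ)
    (l : Fin (hermiteDim d (d + 2 * k))) :
    ∑ l', ‖A ⟨k, l⟩ ⟨k', l'⟩‖^2 ≤ (blockNorm d A k k')^2 := by
  set B := matBlockCLM A k k' with hB
  set S : ℝ := ∑ l', ‖A ⟨k, l⟩ ⟨k', l'⟩‖^2 with hS
  have hS0 : 0 ≤ S := by rw [hS]; positivity
  set v : Euc d k' := WithLp.toLp 2 (fun l' => starRingEnd ℂ (A ⟨k, l⟩ ⟨k', l'⟩)) with hv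
  have hw : B v l = (S : ℂ) := by
    rw [hB, matBlockCLM_coord, hS]
    rw [Complex.ofReal_sum]
    apply Finset.sum_congr rfl
    intro l' _
    show A ⟨k, l⟩ ⟨k', l'⟩ * starRingEnd ℂ (A ⟨k, l⟩ ⟨k', l'⟩) = _
    rw [Complex.mul_conj]
    congr 1
    rw [Complex.sq_norm]
  have h1 : S = ‖B v l‖ := by
    rw [hw, Complex.norm_real, Real.norm_eq_abs, abs_of_nonneg hS0]
  have h2 : ‖B v l‖ ≤ ‖B v‖ := euc_coord_le _ _
  have h3 : ‖B v‖ ≤ ‖B‖ * ‖v‖ := B.le_opNorm v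
  have h4 : ‖v‖^2 = S := by
    rw [euc_norm_sq, hS]
    apply Finset.sum_congr rfl
    intro l' _
    rw [hv]
    show ‖starRingEnd ℂ (A ⟨k, l⟩ ⟨k', l'⟩)‖^2 = _
    rw [RCLike.norm_conj]
  rw [blockNorm_eq_matBlockCLM, ← hB]
  have hvn : 0 ≤ ‖v‖ := norm_nonneg _
  have hBn : 0 ≤ ‖B‖ := norm_nonneg _
  nlinarith [sq_nonneg (‖v‖ - ‖B‖)]

variable {A : IndexE d → IndexE d → ℂ} {M : ℝ}

/-- blanket hypothesis packaging. -/
structure GoodM (d : ℕ) (β : ℝ) (A : IndexE d → IndexE d → ℂ) (M : ℝ) : Prop where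
  hd : 1 ≤ d
  hβ : 1/2 < β
  hM : 0 ≤ M
  hbn : ∀ k k', blockNorm d A k k' ≤ M * cw d β k k'

namespace GoodM

lemma hβ0 (h : GoodM d β A M) : (0:ℝ) ≤ β := by linarith [h.hβ]

lemma bn_sq_le (h : GoodM d β A M) (k k' : ℕ) :
    (blockNorm d A k k')^2 ≤ M^2 * ff d (2*β) k k' := by
  have h1 : (blockNorm d A k k')^2 ≤ (M * cw d β k k')^2 := by
    apply pow_le_pow_left₀ (norm_nonneg _) (h.hbn k k')
  calc (blockNorm d A k k')^2 ≤ (M * cw d β k k')^2 := h1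
    _ = M^2 * (cw d β k k')^2 := by ring
    _ ≤ M^2 * ff d (2*β) k k' := by
        apply mul_le_mul_of_nonneg_left (cw_sq_le h.hd h.hβ0 k k') (by positivity)

lemma summable_row_sq (h : GoodM d β A M) (a : IndexE d) :
    Summable (fun b : IndexE d => ‖A a b‖^2) := by
  rw [summable_sigma_of_nonneg (fun b => by positivity)]
  constructor
  · exact fun k' => (hasSum_fintype _).summable
  · apply Summable.of_nonneg_of_le (fun k' => tsum_nonneg (fun l' => by positivity))
      (fun k' => ?_) ((ff_summable h.hd (hγ2 h.hβ) a.1).mul_left (M^2))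
    rw [tsum_fintype]
    calc ∑ l', ‖A a ⟨k', l'⟩‖^2 ≤ (blockNorm d A a.1 k')^2 := by
          obtain ⟨k, l⟩ := a
          exact rowsq_le A k k' l
      _ ≤ M^2 * ff d (2*β) a.1 k' := h.bn_sq_le a.1 k'

lemma summable_mul (h : GoodM d β A M) (ξ : Hsp d) (a : IndexE d) :
    Summable (fun b : IndexE d => A a b * ξ b) := by
  apply Summable.of_norm_bounded
    (g := fun b => (‖A a b‖^2 + ‖ξ b‖^2)/2)
    (((h.summable_row_sq a).add (summable_sq ξ)).div_const 2)
  intro b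
  rw [norm_mul]
  nlinarith [sq_nonneg (‖A a b‖ - ‖ξ b‖), norm_nonneg (A a b), norm_nonneg (ξ b),
    norm_nonneg ((ξ : ∀ _, ℂ) b)]

end GoodM

/-- the candidate image function -/
noncomputable def gfun (A : IndexE d → IndexE d → ℂ) (ξ : Hsp d) (a : IndexE d) : ℂ :=
  ∑' b : IndexE d, A a b * ξ b

/-- the `k`-th block of `gfun` as a Euclidean vector -/
noncomputable def gblk (A : IndexE d → IndexE d → ℂ) (ξ : Hsp d) (k : ℕ) : Euc d k :=
  (WithLp.equiv 2 _).symm (fun l => gfun A ξ ⟨k, l⟩)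

lemma gblk_coord (A : IndexE d → IndexE d → ℂ) (ξ : Hsp d) (k : ℕ)
    (l : Fin (hermiteDim d (d + 2 * k))) : gblk A ξ k l = gfun A ξ ⟨k, l⟩ := rfl

namespace GoodM

lemma block_hasSum (h : GoodM d β A M) (ξ : Hsp d) (k : ℕ) :
    HasSum (fun k' => matBlockCLM A k k' (projCLM d k' ξ)) (gblk A ξ k) := by
  have hcoord : ∀ l : Fin (hermiteDim d (d + 2 * k)),
      HasSum (fun k' => matBlockCLM A k k' (projCLM d k' ξ) l) (gfun A ξ ⟨k, l⟩) := by
    intro l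
    have hsum := (h.summable_mul ξ ⟨k, l⟩).hasSum
    apply HasSum.sigma hsum
    intro k'
    have hfin := hasSum_fintype (fun l' => A ⟨k, l⟩ ⟨k', l'⟩ * ξ ⟨k', l'⟩)
    have heq : matBlockCLM A k k' (projCLM d k' ξ) l
        = ∑ l', A ⟨k, l⟩ ⟨k', l'⟩ * ξ ⟨k', l'⟩ := by
      rw [matBlockCLM_coord]
      exact Finset.sum_congr rfl fun l' _ => rfl
    rw [heq]
    exact hfin
  have hPi : HasSum (fun k' => ((matBlockCLM A k k' (projCLM d k' ξ)) :
      Fin (hermiteDim d (d + 2 * k)) → ℂ)) (fun l => gfun A ξ ⟨k, l⟩) :=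
    Pi.hasSum.2 hcoord
  exact ((EuclideanSpace.equiv (Fin (hermiteDim d (d + 2 * k))) ℂ).hasSum
    (f := fun k' => matBlockCLM A k k' (projCLM d k' ξ)) (y := fun l => gfun A ξ ⟨k, l⟩)).1 hPi

lemma usq_summable (ξ : Hsp d) : Summable (fun k : ℕ => ‖projCLM d k ξ‖^2) := by
  have h := summable_sq ξ
  have h2 := (summable_sigma_of_nonneg
    (f := fun b : IndexE d => ‖ξ b‖^2) (fun b => by positivity)).1 h
  apply h2.2.congr
  intro k
  rw [tsum_fintype, euc_norm_sq]
  exact Finset.sum_congr rfl fun l _ => rfl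

lemma usq_tsum (ξ : Hsp d) : ∑' k : ℕ, ‖projCLM d k ξ‖^2 = ‖ξ‖^2 := by
  calc ∑' k : ℕ, ‖projCLM d k ξ‖^2
      = ∑' (k : ℕ) (l : Fin (hermiteDim d (d + 2 * k))), ‖ξ ⟨k, l⟩‖^2 := by
        apply tsum_congr
        intro k
        rw [euc_norm_sq, tsum_fintype]
        exact Finset.sum_congr rfl fun l _ => rfl
    _ = ∑' a : IndexE d, ‖ξ a‖^2 :=
        (Summable.tsum_sigma' (fun k => (hasSum_fintype _).summable) (summable_sq ξ)).symm
    _ = ‖ξ‖^2 := (norm_sq_eq_tsum ξ).symm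

lemma summable_cw_u (h : GoodM d β A M) (ξ : Hsp d) (k : ℕ) :
    Summable (fun k' => cw d β k k' * ‖projCLM d k' ξ‖) := by
  apply Summable.of_nonneg_of_le
    (fun k' => mul_nonneg (le_of_lt (cw_pos (β := β) h.hd k k')) (norm_nonneg _))
    (fun k' => ?_)
    (((((ff_summable h.hd (hγ2 h.hβ) k)).add (usq_summable ξ))).div_const 2)
  have h1 := cw_sq_le h.hd h.hβ0 k k'
  nlinarith [sq_nonneg (cw d β k k' - ‖projCLM d k' ξ‖), cw_pos (β := β) h.hd k k',
    norm_nonneg (projCLM d k' ξ)]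

lemma block_norm_le (h : GoodM d β A M) (ξ : Hsp d) (k : ℕ) :
    ‖gblk A ξ k‖ ≤ M * ∑' k', cw d β k k' * ‖projCLM d k' ξ‖ := by
  have hb := h.block_hasSum ξ k
  rw [← hb.tsum_eq]
  have hterm : ∀ k', ‖matBlockCLM A k k' (projCLM d k' ξ)‖ ≤
      M * (cw d β k k' * ‖projCLM d k' ξ‖) := by
    intro k'
    calc ‖matBlockCLM A k k' (projCLM d k' ξ)‖
        ≤ ‖matBlockCLM A k k'‖ * ‖projCLM d k' ξ‖ := ContinuousLinearMap.le_opNorm _ _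
      _ ≤ (M * cw d β k k') * ‖projCLM d k' ξ‖ := by
          apply mul_le_mul_of_nonneg_right _ (norm_nonneg _)
          rw [← blockNorm_eq_matBlockCLM]; exact h.hbn k k'
      _ = M * (cw d β k k' * ‖projCLM d k' ξ‖) := by ring
  have hsumnorm : Summable (fun k' => ‖matBlockCLM A k k' (projCLM d k' ξ)‖) :=
    Summable.of_nonneg_of_le (fun k' => norm_nonneg _) hterm
      ((h.summable_cw_u ξ k).mul_left M)
  refine le_trans (norm_tsum_le_tsum_norm (E := Euc d k) hsumnorm) ?_
  refine le_trans (Summable.tsum_le_tsum hterm hsumnorm ((h.summable_cw_u ξ k).mul_left M)) ?_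
  exact le_of_eq tsum_mul_left

end GoodM

/-- Cauchy-Schwarz for tsums of nonnegative reals. -/
lemma tsum_CS {f g : ℕ → ℝ} (hf : ∀ i, 0 ≤ f i) (hg : ∀ i, 0 ≤ g i)
    (hf2 : Summable fun i => f i^2) (hg2 : Summable fun i => g i^2)
    (hfg : Summable fun i => f i * g i) :
    (∑' i, f i * g i)^2 ≤ (∑' i, f i^2) * (∑' i, g i^2) := by
  set R := (∑' i, f i^2) * (∑' i, g i^2) with hR
  have hR0 : 0 ≤ R := mul_nonneg (tsum_nonneg fun i => by positivity)
    (tsum_nonneg fun i => by positivity)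
  have hs : ∀ s : Finset ℕ, ∑ i ∈ s, f i * g i ≤ Real.sqrt R := by
    intro s
    apply le_of_sq_le_sq (Real.sqrt_nonneg R) _ (Finset.sum_nonneg fun i _ =>
      mul_nonneg (hf i) (hg i))
    rw [Real.sq_sqrt hR0, hR]
    calc (∑ i ∈ s, f i * g i)^2 ≤ (∑ i ∈ s, f i^2) * (∑ i ∈ s, g i^2) :=
          Finset.sum_mul_sq_le_sq_mul_sq s f g
      _ ≤ (∑' i, f i^2) * (∑' i, g i^2) := by
          apply mul_le_mul (Summable.sum_le_tsum s (fun i _ => by positivity) hf2)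
            (Summable.sum_le_tsum s (fun i _ => by positivity) hg2)
            (Finset.sum_nonneg fun i _ => by positivity)
            (tsum_nonneg fun i => by positivity)
  have h1 : ∑' i, f i * g i ≤ Real.sqrt R := Summable.tsum_le_of_sum_le hfg hs
  calc (∑' i, f i * g i)^2 ≤ (Real.sqrt R)^2 := by
        apply pow_le_pow_left₀ (tsum_nonneg fun i => mul_nonneg (hf i) (hg i)) h1
    _ = R := Real.sq_sqrt hR0

namespace GoodM

lemma cw_eq_sqrt (h : GoodM d β A M) (k k' : ℕ) :
    cw d β k k' = Real.sqrt (ff d (2*β) k k') * Real.sqrt (ff d (2*β) k' k) := by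
  rw [← Real.sqrt_mul (ff_nonneg h.hd _ k k'), ← cw_sq_eq h.hd,
    Real.sqrt_sq (le_of_lt (cw_pos h.hd k k'))]

/-- the Schur estimate: square of one weighted row sum -/
lemma schur_row (h : GoodM d β A M) (ξ : Hsp d) (k : ℕ) :
    (∑' k', cw d β k k' * ‖projCLM d k' ξ‖)^2 ≤
      Kc d β * ∑' k', ff d (2*β) k' k * ‖projCLM d k' ξ‖^2 := by
  set f : ℕ → ℝ := fun k' => Real.sqrt (ff d (2*β) k k') with hf
  set g : ℕ → ℝ := fun k' => Real.sqrt (ff d (2*β) k' k) * ‖projCLM d k' ξ‖ with hg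
  have hfg : ∀ k', f k' * g k' = cw d β k k' * ‖projCLM d k' ξ‖ := by
    intro k'
    rw [hf, hg, h.cw_eq_sqrt k k']
    ring
  have hf2 : ∀ k', f k'^2 = ff d (2*β) k k' := fun k' =>
    Real.sq_sqrt (ff_nonneg h.hd _ k k')
  have hg2 : ∀ k', g k'^2 = ff d (2*β) k' k * ‖projCLM d k' ξ‖^2 := by
    intro k'
    rw [hg, mul_pow, Real.sq_sqrt (ff_nonneg h.hd _ k' k)]
  have hsum_f2 : Summable fun k' => f k'^2 := by
    simp_rw [hf2]; exact ff_summable h.hd (hγ2 h.hβ) k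
  have hsum_g2 : Summable fun k' => g k'^2 := by
    simp_rw [hg2]
    apply Summable.of_nonneg_of_le
      (fun k' => mul_nonneg (ff_nonneg h.hd _ k' k) (by positivity))
      (fun k' => ?_) (usq_summable ξ)
    calc ff d (2*β) k' k * ‖projCLM d k' ξ‖^2
        ≤ 1 * ‖projCLM d k' ξ‖^2 := by
          apply mul_le_mul_of_nonneg_right (ff_le_one h.hd (by linarith [h.hβ] : (0:ℝ) ≤ 2*β) k' k)
            (by positivity)
      _ = ‖projCLM d k' ξ‖^2 := one_mul _
  have hsum_fg : Summable fun k' => f k' * g k' := by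
    simp_rw [hfg]; exact h.summable_cw_u ξ k
  have hCS := tsum_CS (f := f) (g := g) (fun k' => Real.sqrt_nonneg _)
    (fun k' => mul_nonneg (Real.sqrt_nonneg _) (norm_nonneg _)) hsum_f2 hsum_g2 hsum_fg
  simp_rw [hfg, hf2, hg2] at hCS
  calc (∑' k', cw d β k k' * ‖projCLM d k' ξ‖)^2
      ≤ (∑' k', ff d (2*β) k k') * (∑' k', ff d (2*β) k' k * ‖projCLM d k' ξ‖^2) := hCS
    _ ≤ Kc d β * ∑' k', ff d (2*β) k' k * ‖projCLM d k' ξ‖^2 := by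
        apply mul_le_mul_of_nonneg_right (row_sum_le h.hd h.hβ k)
        exact tsum_nonneg fun k' => mul_nonneg (ff_nonneg h.hd _ k' k) (by positivity)

set_option maxHeartbeats 1000000 in
/-- Fubini part of the Schur test -/
lemma schur_fubini (h : GoodM d β A M) (ξ : Hsp d) :
    Summable (fun k : ℕ => ∑' k', ff d (2*β) k' k * ‖projCLM d k' ξ‖^2) ∧
    ∑' k : ℕ, (∑' k', ff d (2*β) k' k * ‖projCLM d k' ξ‖^2) ≤ Kc d β * ‖ξ‖^2 := by
  set F : ℕ × ℕ → ℝ := fun p => ff d (2*β) p.1 p.2 * ‖projCLM d p.1 ξ‖^2 with hF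
  have hF0 : ∀ p, 0 ≤ F p := fun p => mul_nonneg (ff_nonneg h.hd _ _ _) (by positivity)
  have hfib : ∀ i, Summable fun j => F (i, j) := by
    intro i
    exact (ff_summable h.hd (hγ2 h.hβ) i).mul_right (‖projCLM d i ξ‖^2)
  have hmarg : Summable fun i => ∑' j, F (i, j) := by
    apply Summable.of_nonneg_of_le (fun i => tsum_nonneg fun j => hF0 _)
      (fun i => ?_) ((usq_summable ξ).mul_left (Kc d β))
    have : ∑' j, F (i, j) = (∑' j, ff d (2*β) i j) * ‖projCLM d i ξ‖^2 := by
      rw [← tsum_mul_right]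
    rw [this]
    apply mul_le_mul_of_nonneg_right (row_sum_le h.hd h.hβ i) (by positivity)
  have hFsum : Summable F := (summable_prod_of_nonneg hF0).2 ⟨hfib, hmarg⟩
  have hFswap : Summable (fun p : ℕ × ℕ => F p.swap) := hFsum.prod_symm
  have hfib' : ∀ j, Summable fun i => F (i, j) := by
    intro j
    simpa using hFswap.prod_factor j
  have hW : HasSum (fun j => ∑' i, F (i, j)) (∑' p : ℕ × ℕ, F p.swap) := by
    apply HasSum.prod_fiberwise hFswap.hasSum
    intro j
    exact (hfib' j).hasSum
  have hswap_eq : (∑' p : ℕ × ℕ, F p.swap) = ∑' p, F p := by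
    have := (Equiv.prodComm ℕ ℕ).tsum_eq F
    simpa [Function.comp] using this
  refine ⟨hW.summable, ?_⟩
  rw [hW.tsum_eq, hswap_eq, Summable.tsum_prod' hFsum hfib]
  calc ∑' i, ∑' j, F (i, j) ≤ ∑' i : ℕ, Kc d β * ‖projCLM d i ξ‖^2 := by
        apply Summable.tsum_le_tsum _ hmarg ((usq_summable ξ).mul_left (Kc d β))
        intro i
        have heq : ∑' j, F (i, j) = (∑' j, ff d (2*β) i j) * ‖projCLM d i ξ‖^2 := by
          rw [← tsum_mul_right]
        rw [heq]
        exact mul_le_mul_of_nonneg_right (row_sum_le h.hd h.hβ i) (by positivity)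
    _ = Kc d β * ∑' i : ℕ, ‖projCLM d i ξ‖^2 := tsum_mul_left
    _ = Kc d β * ‖ξ‖^2 := by rw [usq_tsum]

lemma gfun_sq_summable (h : GoodM d β A M) (ξ : Hsp d) :
    Summable (fun a : IndexE d => ‖gfun A ξ a‖^2) ∧
      ∑' a : IndexE d, ‖gfun A ξ a‖^2 ≤ (M * Kc d β * ‖ξ‖)^2 := by
  obtain ⟨hWsum, hWle⟩ := h.schur_fubini ξ
  have hK0 : 0 < Kc d β := lt_of_lt_of_le one_pos (one_le_Kc h.hd h.hβ)
  have hmaj : ∀ k : ℕ, ∑ l, ‖gfun A ξ ⟨k, l⟩‖^2 ≤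
      M^2 * Kc d β * (∑' k', ff d (2*β) k' k * ‖projCLM d k' ξ‖^2) := by
    intro k
    have h1 : ∑ l, ‖gfun A ξ ⟨k, l⟩‖^2 = ‖gblk A ξ k‖^2 := by
      rw [euc_norm_sq]
      exact Finset.sum_congr rfl fun l _ => rfl
    rw [h1]
    have h2 := h.block_norm_le ξ k
    have h3 := h.schur_row ξ k
    have h4 : (0:ℝ) ≤ M * ∑' k', cw d β k k' * ‖projCLM d k' ξ‖ :=
      mul_nonneg h.hM (tsum_nonneg fun k' =>
        mul_nonneg (le_of_lt (cw_pos h.hd k k')) (norm_nonneg _))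
    calc ‖gblk A ξ k‖^2
        ≤ (M * ∑' k', cw d β k k' * ‖projCLM d k' ξ‖)^2 :=
          pow_le_pow_left₀ (norm_nonneg _) h2 2
      _ = M^2 * (∑' k', cw d β k k' * ‖projCLM d k' ξ‖)^2 := by ring
      _ ≤ M^2 * (Kc d β * ∑' k', ff d (2*β) k' k * ‖projCLM d k' ξ‖^2) := by
          apply mul_le_mul_of_nonneg_left h3 (by positivity)
      _ = M^2 * Kc d β * (∑' k', ff d (2*β) k' k * ‖projCLM d k' ξ‖^2) := by ring
  have hmargsum : Summable (fun k : ℕ => ∑' l, ‖gfun A ξ ⟨k, l⟩‖^2) := by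
    apply Summable.of_nonneg_of_le (fun k => tsum_nonneg fun l => by positivity)
      (fun k => ?_) (hWsum.mul_left (M^2 * Kc d β))
    rw [tsum_fintype]
    exact hmaj k
  have hsum : Summable (fun a : IndexE d => ‖gfun A ξ a‖^2) := by
    rw [summable_sigma_of_nonneg (fun a => by positivity)]
    exact ⟨fun k => (hasSum_fintype _).summable, hmargsum⟩
  refine ⟨hsum, ?_⟩
  rw [Summable.tsum_sigma' (fun k => (hasSum_fintype _).summable) hsum]
  calc ∑' k : ℕ, ∑' l, ‖gfun A ξ ⟨k, l⟩‖^2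
      ≤ ∑' k : ℕ, M^2 * Kc d β * (∑' k', ff d (2*β) k' k * ‖projCLM d k' ξ‖^2) := by
        apply Summable.tsum_le_tsum _ hmargsum (hWsum.mul_left (M^2 * Kc d β))
        intro k
        rw [tsum_fintype]
        exact hmaj k
    _ = M^2 * Kc d β * ∑' k : ℕ, (∑' k', ff d (2*β) k' k * ‖projCLM d k' ξ‖^2) :=
        tsum_mul_left
    _ ≤ M^2 * Kc d β * (Kc d β * ‖ξ‖^2) := by
        apply mul_le_mul_of_nonneg_left hWle (by positivity)
    _ = (M * Kc d β * ‖ξ‖)^2 := by ring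

lemma gfun_mem (h : GoodM d β A M) (ξ : Hsp d) : Memℓp (gfun A ξ) 2 := by
  apply memℓp_gen
  apply ((h.gfun_sq_summable ξ).1).congr
  intro a
  exact (rpow_toReal_two _ (norm_nonneg _)).symm

/-- the operator associated to the matrix `A` -/
noncomputable def Top (h : GoodM d β A M) : Hsp d →L[ℂ] Hsp d :=
  LinearMap.mkContinuous
    { toFun := fun ξ => (⟨gfun A ξ, h.gfun_mem ξ⟩ : Hsp d)
      map_add' := fun ξ η => by
        apply lp.ext
        rw [lp.coeFn_add]
        funext a
        show gfun A (ξ + η) a = gfun A ξ a + gfun A η a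
        rw [gfun, gfun, gfun, ← Summable.tsum_add (h.summable_mul ξ a) (h.summable_mul η a)]
        apply tsum_congr
        intro b
        have : ((ξ + η : Hsp d) : ∀ _, ℂ) b = ξ b + η b := by rw [lp.coeFn_add]; rfl
        rw [this]
        ring
      map_smul' := fun c ξ => by
        apply lp.ext
        rw [RingHom.id_apply, lp.coeFn_smul]
        funext a
        show gfun A (c • ξ) a = c • gfun A ξ a
        rw [gfun, gfun, smul_eq_mul, ← tsum_mul_left]
        apply tsum_congr
        intro b
        have : ((c • ξ : Hsp d) : ∀ _, ℂ) b = c * ξ b := by rw [lp.coeFn_smul]; rfl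
        rw [this]
        ring }
    (M * Kc d β)
    (fun ξ => by
      have hK0 : 0 < Kc d β := lt_of_lt_of_le one_pos (one_le_Kc h.hd h.hβ)
      have hC : 0 ≤ M * Kc d β * ‖ξ‖ :=
        mul_nonneg (mul_nonneg h.hM (le_of_lt hK0)) (norm_nonneg _)
      apply lp.norm_le_of_tsum_le (by norm_num : 0 < (2:ℝ≥0∞).toReal) hC
      have := (h.gfun_sq_summable ξ).2
      rw [rpow_toReal_two _ hC]
      calc ∑' a : IndexE d, ‖gfun A ξ a‖ ^ (2:ℝ≥0∞).toReal
          = ∑' a : IndexE d, ‖gfun A ξ a‖ ^ 2 :=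
            tsum_congr fun a => rpow_toReal_two _ (norm_nonneg _)
        _ ≤ (M * Kc d β * ‖ξ‖)^2 := this)

lemma Top_apply (h : GoodM d β A M) (ξ : Hsp d) (a : IndexE d) :
    (Top h ξ : ∀ _ : IndexE d, ℂ) a = ∑' b : IndexE d, A a b * ξ b := rfl

lemma matEnt_Top (h : GoodM d β A M) : matEnt (Top h) = A := by
  funext a b
  rw [matEnt, Top_apply]
  have heq : (fun c : IndexE d => A a c * (lp.single 2 b 1 : Hsp d) c)
      = fun c : IndexE d => if c = b then A a b else 0 := by
    funext c
    rw [single_coe]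
    by_cases hc : c = b
    · subst hc; simp
    · simp [hc]
  rw [heq]
  exact tsum_ite_eq b (fun _ => A a b)

lemma opBlk_Top_le (h : GoodM d β A M) (k k' : ℕ) :
    ‖opBlk d k k' (Top h)‖ ≤ M * cw d β k k' := by
  rw [← blockNorm_matEnt, matEnt_Top]
  exact h.hbn k k'

end GoodM
end Schur

section Comp
variable {d : ℕ} {β : ℝ}

lemma opBlk_comp_hasSum (S T : Hsp d →L[ℂ] Hsp d) (k1 k2 : ℕ) (v : Euc d k2) :
    HasSum (fun k => opBlk d k1 k S (opBlk d k k2 T v)) (opBlk d k1 k2 (S.comp T) v) := by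
  have h := hasSum_blocks (T (inclCLM d k2 v))
  have h2 := ((projCLM d k1).comp S).hasSum h
  exact h2

lemma opBlk_comp_le (hd : 1 ≤ d) (hβ : 1/2 < β) {S T : Hsp d →L[ℂ] Hsp d} {M1 M2 : ℝ}
    (hM1 : 0 ≤ M1) (hM2 : 0 ≤ M2)
    (hS : ∀ k k', ‖opBlk d k k' S‖ ≤ M1 * cw d β k k')
    (hT : ∀ k k', ‖opBlk d k k' T‖ ≤ M2 * cw d β k k') (k1 k2 : ℕ) :
    ‖opBlk d k1 k2 (S.comp T)‖ ≤ 2 * Kc d β * M1 * M2 * cw d β k1 k2 := by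
  have hKc : (0:ℝ) < Kc d β := lt_of_lt_of_le one_pos (one_le_Kc hd hβ)
  have hcw12 := cw_pos (β := β) hd k1 k2
  apply ContinuousLinearMap.opNorm_le_bound _ (by positivity)
  intro v
  have hsum := opBlk_comp_hasSum S T k1 k2 v
  rw [← hsum.tsum_eq]
  have hterm : ∀ k, ‖opBlk d k1 k S (opBlk d k k2 T v)‖ ≤
      (M1 * M2 * ‖v‖) * (cw d β k1 k * cw d β k k2) := by
    intro k
    calc ‖opBlk d k1 k S (opBlk d k k2 T v)‖
        ≤ ‖opBlk d k1 k S‖ * ‖opBlk d k k2 T v‖ := ContinuousLinearMap.le_opNorm _ _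
      _ ≤ ‖opBlk d k1 k S‖ * (‖opBlk d k k2 T‖ * ‖v‖) := by
          apply mul_le_mul_of_nonneg_left (ContinuousLinearMap.le_opNorm _ _) (norm_nonneg _)
      _ ≤ (M1 * cw d β k1 k) * ((M2 * cw d β k k2) * ‖v‖) := by
          apply mul_le_mul (hS k1 k)
            (mul_le_mul_of_nonneg_right (hT k k2) (norm_nonneg _))
            (by positivity) (by
              have := cw_pos (β := β) hd k1 k
              positivity)
      _ = (M1 * M2 * ‖v‖) * (cw d β k1 k * cw d β k k2) := by ring
  have hsummaj : Summable (fun k => (M1 * M2 * ‖v‖) * (cw d β k1 k * cw d β k k2)) :=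
    (summable_cw_mul_cw hd hβ k1 k2).mul_left _
  have hsumnorm : Summable (fun k => ‖opBlk d k1 k S (opBlk d k k2 T v)‖) :=
    Summable.of_nonneg_of_le (fun _ => norm_nonneg _) hterm hsummaj
  refine le_trans (norm_tsum_le_tsum_norm (E := Euc d k1) hsumnorm) ?_
  refine le_trans (Summable.tsum_le_tsum hterm hsumnorm hsummaj) ?_
  rw [tsum_mul_left]
  calc (M1 * M2 * ‖v‖) * ∑' k, cw d β k1 k * cw d β k k2
      ≤ (M1 * M2 * ‖v‖) * (2 * Kc d β * cw d β k1 k2) := by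
        apply mul_le_mul_of_nonneg_left (tsum_cw_mul_cw_le hd hβ k1 k2) (by positivity)
    _ = 2 * Kc d β * M1 * M2 * cw d β k1 k2 * ‖v‖ := by ring

lemma opBlk_pow_le (hd : 1 ≤ d) (hβ : 1/2 < β) {T : Hsp d →L[ℂ] Hsp d} {M : ℝ}
    (hM : 0 ≤ M) (hT : ∀ k k', ‖opBlk d k k' T‖ ≤ M * cw d β k k') :
    ∀ n k k', ‖opBlk d k k' (T^(n+1))‖ ≤ M * (2 * Kc d β * M)^n * cw d β k k' := by
  have hKc : (0:ℝ) < Kc d β := lt_of_lt_of_le one_pos (one_le_Kc hd hβ)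
  intro n
  induction n with
  | zero =>
    intro k k'
    simpa [pow_one] using hT k k'
  | succ n ih =>
    intro k k'
    have hstep : T^(n+1+1) = T.comp (T^(n+1)) := by
      rw [pow_succ']
      rfl
    rw [hstep]
    have hM2 : (0:ℝ) ≤ M * (2 * Kc d β * M)^n := by positivity
    calc ‖opBlk d k k' (T.comp (T^(n+1)))‖
        ≤ 2 * Kc d β * M * (M * (2 * Kc d β * M)^n) * cw d β k k' :=
          opBlk_comp_le hd hβ hM hM2 hT ih k k'
      _ = M * (2 * Kc d β * M)^(n+1) * cw d β k k' := by ring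

lemma opBlk_exp_sub_one_le (hd : 1 ≤ d) (hβ : 1/2 < β) {T : Hsp d →L[ℂ] Hsp d} {M : ℝ}
    (hM : 0 ≤ M) (hT : ∀ k k', ‖opBlk d k k' T‖ ≤ M * cw d β k k') (k k' : ℕ) :
    ‖opBlk d k k' (NormedSpace.exp T - 1)‖ ≤
      Real.exp (2 * Kc d β * M) * M * cw d β k k' := by
  have hKc : (0:ℝ) < Kc d β := lt_of_lt_of_le one_pos (one_le_Kc hd hβ)
  have hcw := cw_pos (β := β) hd k k'
  set C : ℝ := 2 * Kc d β with hC
  have hCM : (0:ℝ) ≤ C * M := by positivity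
  have hexp := NormedSpace.exp_series_hasSum_exp' (𝕂 := ℂ) T
  have h1 := (opBlkCLM d k k').hasSum hexp
  have h2 : HasSum (fun n : ℕ => opBlkCLM d k k' (((n+1).factorial⁻¹ : ℂ) • T^(n+1)))
      (opBlkCLM d k k' (NormedSpace.exp T - 1)) := by
    apply (hasSum_nat_add_iff (f := fun n : ℕ =>
      opBlkCLM d k k' ((n.factorial⁻¹ : ℂ) • T^n)) 1).2
    have hone : opBlkCLM d k k' (NormedSpace.exp T - 1) +
        ∑ i ∈ Finset.range 1, opBlkCLM d k k' ((i.factorial⁻¹ : ℂ) • T^i)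
        = opBlkCLM d k k' (NormedSpace.exp T) := by
      rw [Finset.sum_range_one]
      simp only [Nat.factorial_zero, Nat.cast_one, inv_one, one_smul, pow_zero, map_sub]
      abel
    rw [hone]
    exact h1
  have hterm : ∀ n : ℕ, ‖opBlkCLM d k k' (((n+1).factorial⁻¹ : ℂ) • T^(n+1))‖ ≤
      (M * cw d β k k') * ((C * M)^n / n.factorial) := by
    intro n
    rw [map_smul]
    rw [norm_smul ((((n+1).factorial : ℂ))⁻¹) (opBlkCLM d k k' (T^(n+1)))]
    have hnc : ‖(((n+1).factorial⁻¹ : ℂ))‖ = (((n+1).factorial : ℝ))⁻¹ := by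
      rw [norm_inv]
      congr 1
      exact_mod_cast RCLike.norm_natCast (K := ℂ) (n+1).factorial
    rw [hnc]
    have hb := opBlk_pow_le hd hβ hM hT n k k'
    have hble : ‖opBlkCLM d k k' (T^(n+1))‖ ≤ M * (C * M)^n * cw d β k k' := by
      rw [opBlkCLM_apply]; exact hb
    have hfac : (((n+1).factorial : ℝ))⁻¹ ≤ ((n.factorial : ℝ))⁻¹ := by
      apply inv_anti₀ (by positivity)
      exact_mod_cast Nat.factorial_le (Nat.le_succ n)
    calc (((n+1).factorial : ℝ))⁻¹ * ‖opBlkCLM d k k' (T^(n+1))‖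
        ≤ ((n.factorial : ℝ))⁻¹ * (M * (C * M)^n * cw d β k k') := by
          apply mul_le_mul hfac hble (norm_nonneg _) (by positivity)
      _ = (M * cw d β k k') * ((C * M)^n / n.factorial) := by ring
  have hsummaj : Summable (fun n : ℕ => (M * cw d β k k') * ((C * M)^n / n.factorial)) :=
    (Real.summable_pow_div_factorial (C * M)).mul_left _
  have hsumnorm : Summable (fun n : ℕ =>
      ‖opBlkCLM d k k' (((n+1).factorial⁻¹ : ℂ) • T^(n+1))‖) :=
    Summable.of_nonneg_of_le (fun _ => norm_nonneg _) hterm hsummaj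
  have heq : opBlkCLM d k k' (NormedSpace.exp T - 1)
      = ∑' n : ℕ, opBlkCLM d k k' (((n+1).factorial⁻¹ : ℂ) • T^(n+1)) := h2.tsum_eq.symm
  rw [← opBlkCLM_apply, heq]
  refine le_trans (norm_tsum_le_tsum_norm hsumnorm) ?_
  refine le_trans (Summable.tsum_le_tsum hterm hsumnorm hsummaj) ?_
  rw [tsum_mul_left]
  have htsumexp : ∑' n : ℕ, (C * M)^n / n.factorial ≤ Real.exp (C * M) :=
    Summable.tsum_le_of_sum_range_le (Real.summable_pow_div_factorial (C * M))
      (fun n => Real.sum_le_exp_of_nonneg hCM n)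
  calc (M * cw d β k k') * ∑' n : ℕ, (C * M)^n / n.factorial
      ≤ (M * cw d β k k') * Real.exp (C * M) := by
        apply mul_le_mul_of_nonneg_left htsumexp (by positivity)
    _ = Real.exp (C * M) * M * cw d β k k' := by ring

end Comp

end Stmt7

theorem stmt7 (d : ℕ) (hd : 1 ≤ d) (β : ℝ) (hβ : 1 / 2 < β) :
    ∃ C > 0, ∀ (A : IndexE d → IndexE d → ℂ) (MA : ℝ),
      (∀ k k', wtBetaPlus d β k k' * blockNorm d A k k' ≤ MA) →
      ∃ T : lp (fun _ : IndexE d => ℂ) 2 →L[ℂ] lp (fun _ : IndexE d => ℂ) 2,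
        (∀ (ξ : lp (fun _ : IndexE d => ℂ) 2) (a : IndexE d),
          Summable (fun b : IndexE d => A a b * ξ b) ∧
          T ξ a = ∑' b : IndexE d, A a b * ξ b) ∧
        (∀ k k', wtBetaPlus d β k k' *
          blockNorm d (fun a b =>
            (NormedSpace.exp T) (lp.single 2 b (1 : ℂ)) a -
              (if a = b then 1 else 0)) k k' ≤ Real.exp (C * MA) * MA) := by
  have hKc : (0:ℝ) < Stmt7.Kc d β := lt_of_lt_of_le one_pos (Stmt7.one_le_Kc hd hβ)
  refine ⟨2 * Stmt7.Kc d β, by positivity, ?_⟩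
  intro A MA hA
  have hMA : 0 ≤ MA :=
    le_trans (mul_nonneg (le_of_lt (Stmt7.wt_pos (β := β) hd 0 0)) (norm_nonneg _)) (hA 0 0)
  have hbn : ∀ k k', blockNorm d A k k' ≤ MA * Stmt7.cw d β k k' := by
    intro k k'
    have h1 := hA k k'
    have h2 := Stmt7.wt_pos (β := β) hd k k'
    rw [Stmt7.cw]
    calc blockNorm d A k k'
        = (wtBetaPlus d β k k')⁻¹ * (wtBetaPlus d β k k' * blockNorm d A k k') := by
          field_simp
      _ ≤ (wtBetaPlus d β k k')⁻¹ * MA := by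
          apply mul_le_mul_of_nonneg_left h1 (inv_nonneg.2 (le_of_lt h2))
      _ = MA * (wtBetaPlus d β k k')⁻¹ := mul_comm _ _
  have hgood : Stmt7.GoodM d β A MA := ⟨hd, hβ, hMA, hbn⟩
  refine ⟨Stmt7.GoodM.Top hgood, fun ξ a =>
    ⟨hgood.summable_mul ξ a, Stmt7.GoodM.Top_apply hgood ξ a⟩, ?_⟩
  intro k k'
  set T : Stmt7.Hsp d →L[ℂ] Stmt7.Hsp d := Stmt7.GoodM.Top hgood with hT
  have hmat : (fun a b => (NormedSpace.exp T) (lp.single 2 b (1:ℂ)) a -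
      (if a = b then 1 else 0))
      = Stmt7.matEnt (NormedSpace.exp T - 1) := by
    funext a b
    rw [Stmt7.matEnt]
    have hcoe : ((NormedSpace.exp T - 1) (lp.single 2 b (1:ℂ)) : ∀ _ : IndexE d, ℂ) a
        = (NormedSpace.exp T) (lp.single 2 b (1:ℂ)) a
          - ((lp.single 2 b (1:ℂ) : Stmt7.Hsp d) : ∀ _ : IndexE d, ℂ) a := by
      rw [ContinuousLinearMap.sub_apply, lp.coeFn_sub, Pi.sub_apply,
        ContinuousLinearMap.one_apply]
    rw [hcoe, Stmt7.single_coe]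
  rw [hmat, Stmt7.blockNorm_matEnt]
  have hTblocks : ∀ k k', ‖Stmt7.opBlk d k k' T‖ ≤ MA * Stmt7.cw d β k k' :=
    Stmt7.GoodM.opBlk_Top_le hgood
  have hexp := Stmt7.opBlk_exp_sub_one_le hd hβ hMA hTblocks k k'
  calc wtBetaPlus d β k k' * ‖Stmt7.opBlk d k k' (NormedSpace.exp T - 1)‖
      ≤ wtBetaPlus d β k k' *
        (Real.exp (2 * Stmt7.Kc d β * MA) * MA * Stmt7.cw d β k k') := by
        apply mul_le_mul_of_nonneg_left hexp (le_of_lt (Stmt7.wt_pos (β := β) hd k k'))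
    _ = Real.exp (2 * Stmt7.Kc d β * MA) * MA *
        (wtBetaPlus d β k k' * Stmt7.cw d β k k') := by ring
    _ = Real.exp (2 * Stmt7.Kc d β * MA) * MA := by
        rw [Stmt7.wt_mul_cw hd, mul_one]
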